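/- arXiv:1208.5980 — 2 statements merged into one kernel-verified Lean document; each statement's English description precedes it below -/
import Mathlib

section
/- Every data language definable in two-variable first-order logic FO²(∼,<) over data strings is definable in FO²(∼,<,+1), but the converse fails: the successor relation is not expressible in FO²(∼,<); hence FO²(∼,<) ⊊ FO²(∼,<,+1). -/
/-- Syntax of first-order logic over data strings with label predicates,
position equality, data equality `∼`, order `<` and successor `+1`. -/
inductive FO (L : Type) : Type
  | lab : L → ℕ → FO L          -- `a(x)`
  | eq : ℕ → ℕ → FO L           -- `x = y`
  | dataEq : ℕ → ℕ → FO L       -- `x ∼ y`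
  | lt : ℕ → ℕ → FO L           -- `x < y`
  | succ : ℕ → ℕ → FO L         -- `x = y + 1`
  | exist : ℕ → FO L → FO L     -- `∃ x. φ`
  | or : FO L → FO L → FO L
  | not : FO L → FO L

namespace FO

variable {L D : Type}

/-- Satisfaction of a formula in a data string `w : List (L × D)` under a
valuation of variables as positions of `w`. -/
def Sat (w : List (L × D)) : FO L → (ℕ → ℕ) → Prop
  | lab a x, v => ∃ h : v x < w.length, (w.get ⟨v x, h⟩).1 = a
  | eq x y, v => v x = v y
  | dataEq x y, v => ∃ (hx : v x < w.length) (hy : v y < w.length),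
      (w.get ⟨v x, hx⟩).2 = (w.get ⟨v y, hy⟩).2
  | lt x y, v => v x < v y
  | succ x y, v => v x = v y + 1
  | exist n φ, v => ∃ p, p < w.length ∧ Sat w φ (Function.update v n p)
  | or φ ψ, v => Sat w φ v ∨ Sat w ψ v
  | not φ, v => ¬ Sat w φ v

/-- The data language defined by a formula (over data domain `D`). -/
def Lang (D : Type) (φ : FO L) : Set (List (L × D)) := {w | Sat w φ fun _ => 0}

def and (φ ψ : FO L) : FO L := not (or (not φ) (not ψ))

def imp (φ ψ : FO L) : FO L := or (not φ) ψ

def all (n : ℕ) (φ : FO L) : FO L := not (exist n (not φ))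

/-- All variables (free or bound) of the formula have index `< n`:
the formula is in the `n`-variable fragment. -/
def VarsLt (n : ℕ) : FO L → Prop
  | lab _ x => x < n
  | eq x y => x < n ∧ y < n
  | dataEq x y => x < n ∧ y < n
  | lt x y => x < n ∧ y < n
  | succ x y => x < n ∧ y < n
  | exist m φ => m < n ∧ VarsLt n φ
  | or φ ψ => VarsLt n φ ∧ VarsLt n ψ
  | not φ => VarsLt n φ

/-- The formula does not use the successor predicate `+1`. -/
def NoSucc : FO L → Prop
  | succ _ _ => False
  | exist _ φ => NoSucc φ
  | or φ ψ => NoSucc φ ∧ NoSucc ψ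
  | not φ => NoSucc φ
  | _ => True

end FO


namespace Sep

def piB (x : ℕ) : ℕ := if x % 4 < 2 then x + 2 else x - 2
def dB (x : ℕ) : ℕ := if x % 4 < 2 then x else x - 2
def piA (P x : ℕ) : ℕ :=
  if x = P then P+1 else if x = P+1 then P else if x = P+2 then P+3
  else if x = P+3 then P+2 else piB x
def dA (P x : ℕ) : ℕ :=
  if x = P+1 then P else if x = P+2 then P+2 else if x = P+3 then P+2 else dB x
lemma piB_spec (x : ℕ) : (x % 4 < 2 ∧ piB x = x + 2) ∨ (2 ≤ x % 4 ∧ piB x = x - 2) := by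
  unfold piB; split <;> [left; right] <;> omega
lemma dB_spec (x : ℕ) : (x % 4 < 2 ∧ dB x = x) ∨ (2 ≤ x % 4 ∧ dB x = x - 2) := by
  unfold dB; split <;> [left; right] <;> omega
lemma piA_spec (P x : ℕ) :
    (x = P ∧ piA P x = P+1) ∨ (x = P+1 ∧ piA P x = P) ∨ (x = P+2 ∧ piA P x = P+3) ∨
    (x = P+3 ∧ piA P x = P+2) ∨ ((x < P ∨ P+3 < x) ∧ piA P x = piB x) := by
  unfold piA; split_ifs with h1 h2 h3 h4
  · exact Or.inl ⟨h1, rfl⟩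
  · exact Or.inr (Or.inl ⟨h2, rfl⟩)
  · exact Or.inr (Or.inr (Or.inl ⟨h3, rfl⟩))
  · exact Or.inr (Or.inr (Or.inr (Or.inl ⟨h4, rfl⟩)))
  · exact Or.inr (Or.inr (Or.inr (Or.inr ⟨by omega, rfl⟩)))
lemma dA_spec (P x : ℕ) :
    (x = P+1 ∧ dA P x = P) ∨ (x = P+2 ∧ dA P x = P+2) ∨ (x = P+3 ∧ dA P x = P+2) ∨
    ((x ≤ P ∨ P+3 < x) ∧ dA P x = dB x) := by
  unfold dA; split_ifs with h1 h2 h3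
  · exact Or.inl ⟨h1, rfl⟩
  · exact Or.inr (Or.inl ⟨h2, rfl⟩)
  · exact Or.inr (Or.inr (Or.inl ⟨h3, rfl⟩))
  · exact Or.inr (Or.inr (Or.inr ⟨by omega, rfl⟩))

/-- choose among four explicit candidates avoiding three values -/
lemma pick4 (c1 c2 c3 c4 a b e : ℕ) (hd : c1 ≠ c2 ∧ c1 ≠ c3 ∧ c1 ≠ c4 ∧ c2 ≠ c3 ∧ c2 ≠ c4 ∧ c3 ≠ c4) :
    ∃ c, (c = c1 ∨ c = c2 ∨ c = c3 ∨ c = c4) ∧ c ≠ a ∧ c ≠ b ∧ c ≠ e := by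
  by_cases h1 : c1 ≠ a ∧ c1 ≠ b ∧ c1 ≠ e
  · exact ⟨c1, Or.inl rfl, h1.1, h1.2.1, h1.2.2⟩
  by_cases h2 : c2 ≠ a ∧ c2 ≠ b ∧ c2 ≠ e
  · exact ⟨c2, Or.inr (Or.inl rfl), h2.1, h2.2.1, h2.2.2⟩
  by_cases h3 : c3 ≠ a ∧ c3 ≠ b ∧ c3 ≠ e
  · exact ⟨c3, Or.inr (Or.inr (Or.inl rfl)), h3.1, h3.2.1, h3.2.2⟩
  · push_neg at h1 h2 h3
    exact ⟨c4, Or.inr (Or.inr (Or.inr rfl)), by omega, by omega, by omega⟩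

section W
variable (P N : ℕ)

/-- window in word B matching the direction of reference z in word A -/
lemma windowB (hP4 : P % 4 = 0) (hN : N = 2*P) (x z a b : ℕ) (hx : x + 16 < N) :
    ∃ c, x < c ∧ c ≤ x + 12 ∧ c < N ∧ ((c < piB c) ↔ (z < piA P z)) ∧ c ≠ a ∧ c ≠ b := by
  obtain ⟨c0, h1, h2, h3⟩ : ∃ c0, x < c0 ∧ c0 ≤ x + 4 ∧ c0 % 4 = 0 :=
    ⟨x + 4 - (x+4) % 4, by omega⟩
  by_cases hz : z < piA P z
  · obtain ⟨c, hc, hca, hcb, _⟩ := pick4 c0 (c0+1) (c0+4) (c0+5) a b 0 (by omega)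
    refine ⟨c, by omega, by omega, by omega, ?_, hca, hcb⟩
    have := piB_spec c; rcases hc with rfl|rfl|rfl|rfl <;> omega
  · obtain ⟨c, hc, hca, hcb, _⟩ := pick4 (c0+2) (c0+3) (c0+6) (c0+7) a b 0 (by omega)
    refine ⟨c, by omega, by omega, by omega, ?_, hca, hcb⟩
    have := piB_spec c; rcases hc with rfl|rfl|rfl|rfl <;> omega

/-- window in word A matching the direction of reference z in word B -/
lemma windowA (hP4 : P % 4 = 0) (hN : N = 2*P) (x z a b : ℕ) (hx : x + 16 < N) :
    ∃ c, x < c ∧ c ≤ x + 12 ∧ c < N ∧ ((c < piA P c) ↔ (z < piB z)) ∧ c ≠ a ∧ c ≠ b := by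
  obtain ⟨c0, h1, h2, h3⟩ : ∃ c0, x < c0 ∧ c0 ≤ x + 4 ∧ c0 % 4 = 0 :=
    ⟨x + 4 - (x+4) % 4, by omega⟩
  by_cases hz : z < piB z
  · obtain ⟨c, hc, hca, hcb, hce⟩ := pick4 c0 (c0+1) (c0+4) (c0+5) a b (P+1) (by omega)
    refine ⟨c, by omega, by omega, by omega, ?_, hca, hcb⟩
    have := piA_spec P c; have := piB_spec c; rcases hc with rfl|rfl|rfl|rfl <;> omega
  · obtain ⟨c, hc, hca, hcb, hce⟩ := pick4 (c0+2) (c0+3) (c0+6) (c0+7) a b (P+2) (by omega)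
    refine ⟨c, by omega, by omega, by omega, ?_, hca, hcb⟩
    have := piA_spec P c; have := piB_spec c; rcases hc with rfl|rfl|rfl|rfl <;> omega
end W

/-- Matching context: two words of length `N = 2*P` given by partner functions
`pi1, pi2` and data functions `d1, d2`, agreeing away from the surgery block
`[P, P+4)`. -/
structure Ctx where
  N : ℕ
  P : ℕ
  pi1 : ℕ → ℕ
  pi2 : ℕ → ℕ
  d1 : ℕ → ℕ
  d2 : ℕ → ℕ
  hN : N = 2 * P
  lt1 : ∀ x, x < N → pi1 x < N
  inv1 : ∀ x, x < N → pi1 (pi1 x) = x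
  ne1 : ∀ x, x < N → pi1 x ≠ x
  cl1 : ∀ x, x < N → x ≤ pi1 x + 2 ∧ pi1 x ≤ x + 2
  deq1 : ∀ x y, x < N → y < N → (d1 x = d1 y ↔ y = x ∨ y = pi1 x)
  lt2 : ∀ x, x < N → pi2 x < N
  inv2 : ∀ x, x < N → pi2 (pi2 x) = x
  ne2 : ∀ x, x < N → pi2 x ≠ x
  cl2 : ∀ x, x < N → x ≤ pi2 x + 2 ∧ pi2 x ≤ x + 2
  deq2 : ∀ x y, x < N → y < N → (d2 x = d2 y ↔ y = x ∨ y = pi2 x)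
  agree : ∀ x, x < N → (x < P ∨ P + 3 < x) → pi1 x = pi2 x ∧ d1 x = d2 x
  win2 : ∀ x z a b, x + 16 < N →
    ∃ c, x < c ∧ c ≤ x + 12 ∧ c < N ∧ ((c < pi2 c) ↔ (z < pi1 z)) ∧ c ≠ a ∧ c ≠ b
  win1 : ∀ x z a b, x + 16 < N →
    ∃ c, x < c ∧ c ≤ x + 12 ∧ c < N ∧ ((c < pi1 c) ↔ (z < pi2 z)) ∧ c ≠ a ∧ c ≠ b

def Ctx.swap (c : Ctx) : Ctx where
  N := c.N
  P := c.P
  pi1 := c.pi2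
  pi2 := c.pi1
  d1 := c.d2
  d2 := c.d1
  hN := c.hN
  lt1 := c.lt2
  inv1 := c.inv2
  ne1 := c.ne2
  cl1 := c.cl2
  deq1 := c.deq2
  lt2 := c.lt1
  inv2 := c.inv1
  ne2 := c.ne1
  cl2 := c.cl1
  deq2 := c.deq1
  agree := fun x hx h => ⟨(c.agree x hx h).1.symm, (c.agree x hx h).2.symm⟩
  win2 := c.win1
  win1 := c.win2

/-- truncated equality -/
def tr (t a b : ℕ) : Prop := a = b ∨ (t ≤ a ∧ t ≤ b)

/-- the simulation invariant with budget `k` -/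
def Sim (c : Ctx) (k p q : ℕ) : Prop :=
  p < c.N ∧ q < c.N ∧ ((p < c.pi1 p) ↔ (q < c.pi2 q)) ∧
  tr (20*k+20) p q ∧ tr (20*k+20) (c.N-1-p) (c.N-1-q) ∧
  tr (20*k+20) (c.pi1 p) (c.pi2 q) ∧ tr (20*k+20) (c.N-1-c.pi1 p) (c.N-1-c.pi2 q)

/-- compatibility of a pair of pebbles -/
def C4 (c : Ctx) (p1 p2 q1 q2 : ℕ) : Prop :=
  (p1 < p2 ↔ q1 < q2) ∧ (p2 < p1 ↔ q2 < q1) ∧ (p1 = p2 ↔ q1 = q2) ∧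
  (c.d1 p1 = c.d1 p2 ↔ c.d2 q1 = c.d2 q2)

lemma Sim.swap {c : Ctx} {k p q : ℕ} (h : Sim c k p q) : Sim c.swap k q p := by
  simp only [Sim, Ctx.swap, tr] at h ⊢; omega

lemma Sim.mono {c : Ctx} {k p q : ℕ} (h : Sim c (k+1) p q) : Sim c k p q := by
  obtain ⟨a1, a2, a3, a4, a5, a6, a7⟩ := h
  exact ⟨a1, a2, a3, by unfold tr at *; omega, by unfold tr at *; omega,
    by unfold tr at *; omega, by unfold tr at *; omega⟩

lemma simSelf (c : Ctx) (k p : ℕ) (hp : p < c.N) (hag : c.pi1 p = c.pi2 p) :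
    Sim c k p p :=
  ⟨hp, hp, by rw [hag], Or.inl rfl, Or.inl rfl, Or.inl (by rw [hag]),
    Or.inl (by rw [hag])⟩

/-- dichotomy: either the pebble pair is pinned-and-equal, or everything is deep -/
lemma dicho (c : Ctx) (k p1 q1 : ℕ) (hk : 20*k+100 < c.P) (h : Sim c (k+1) p1 q1) :
    (q1 = p1 ∧ c.pi2 q1 = c.pi1 p1 ∧ (p1 < c.P ∨ c.P + 3 < p1)) ∨
    (20*k+40 ≤ p1 ∧ 20*k+40 ≤ c.N-1-p1 ∧ 20*k+40 ≤ c.pi1 p1 ∧ 20*k+40 ≤ c.N-1-c.pi1 p1 ∧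
     20*k+40 ≤ q1 ∧ 20*k+40 ≤ c.N-1-q1 ∧ 20*k+40 ≤ c.pi2 q1 ∧ 20*k+40 ≤ c.N-1-c.pi2 q1) := by
  obtain ⟨hp1N, hq1N, hdir, htr1, htr2, htr3, htr4⟩ := h
  have hNP := c.hN
  have hl1 := c.lt1 p1 hp1N
  have hl2 := c.lt2 q1 hq1N
  have hc1 := c.cl1 p1 hp1N
  have hc2 := c.cl2 q1 hq1N
  by_cases e1 : p1 < 20*k+40
  · have hq : q1 = p1 := by unfold tr at htr1; omega
    have hstd : p1 < c.P ∨ c.P + 3 < p1 := by omega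
    have := (c.agree p1 hp1N hstd).1
    exact Or.inl ⟨hq, by rw [hq, ← this], hstd⟩
  by_cases e2 : c.N-1-p1 < 20*k+40
  · have hq : q1 = p1 := by unfold tr at htr2; omega
    have hstd : p1 < c.P ∨ c.P + 3 < p1 := by omega
    have := (c.agree p1 hp1N hstd).1
    exact Or.inl ⟨hq, by rw [hq, ← this], hstd⟩
  by_cases e3 : c.pi1 p1 < 20*k+40
  · have hz : c.pi2 q1 = c.pi1 p1 := by unfold tr at htr3; omega
    have hzN : c.pi1 p1 < c.N := hl1
    have hzstd : c.pi1 p1 < c.P ∨ c.P + 3 < c.pi1 p1 := by omega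
    have hag := (c.agree (c.pi1 p1) hzN hzstd).1
    have hq : q1 = p1 := by
      calc q1 = c.pi2 (c.pi2 q1) := (c.inv2 q1 hq1N).symm
        _ = c.pi2 (c.pi1 p1) := by rw [hz]
        _ = c.pi1 (c.pi1 p1) := by rw [← hag]
        _ = p1 := c.inv1 p1 hp1N
    have hstd : p1 < c.P ∨ c.P + 3 < p1 := by
      have := c.cl1 (c.pi1 p1) hzN
      have := c.inv1 p1 hp1N
      omega
    exact Or.inl ⟨hq, hz, hstd⟩
  by_cases e4 : c.N-1-c.pi1 p1 < 20*k+40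
  · have hz : c.pi2 q1 = c.pi1 p1 := by unfold tr at htr4; omega
    have hzN : c.pi1 p1 < c.N := hl1
    have hzstd : c.pi1 p1 < c.P ∨ c.P + 3 < c.pi1 p1 := by omega
    have hag := (c.agree (c.pi1 p1) hzN hzstd).1
    have hq : q1 = p1 := by
      calc q1 = c.pi2 (c.pi2 q1) := (c.inv2 q1 hq1N).symm
        _ = c.pi2 (c.pi1 p1) := by rw [hz]
        _ = c.pi1 (c.pi1 p1) := by rw [← hag]
        _ = p1 := c.inv1 p1 hp1N
    have hstd : p1 < c.P ∨ c.P + 3 < p1 := by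
      have := c.cl1 (c.pi1 p1) hzN
      have := c.inv1 p1 hp1N
      omega
    exact Or.inl ⟨hq, hz, hstd⟩
  · right
    unfold tr at htr1 htr2 htr3 htr4
    omega


/-- THE forth lemma: Duplicator can answer any Spoiler move, dropping one
budget level. -/
lemma forth (c : Ctx) (k p1 q1 : ℕ) (hk : 20*k+100 < c.P) (hsim : Sim c (k+1) p1 q1)
    (p2 : ℕ) (hp2 : p2 < c.N) :
    ∃ q2, q2 < c.N ∧ Sim c k p2 q2 ∧ C4 c p1 p2 q1 q2 := by
  have hsim' := hsim
  obtain ⟨hp1N, hq1N, hdir, htr1, htr2, htr3, htr4⟩ := hsim'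
  have hNP := c.hN
  have hl1 := c.lt1 p1 hp1N
  have hl2 := c.lt2 q1 hq1N
  have hc1 := c.cl1 p1 hp1N
  have hc2 := c.cl2 q1 hq1N
  have hne1 := c.ne1 p1 hp1N
  have hne2 := c.ne2 q1 hq1N
  by_cases h1 : p2 = p1
  · subst h1
    refine ⟨q1, hq1N, Sim.mono hsim, by simp, by simp, by simp, by simp⟩
  by_cases h2 : p2 = c.pi1 p1
  · subst h2
    have hd1T : c.d1 p1 = c.d1 (c.pi1 p1) := by
      rw [c.deq1 p1 (c.pi1 p1) hp1N hl1]; right; rfl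
    have hd2T : c.d2 q1 = c.d2 (c.pi2 q1) := by
      rw [c.deq2 q1 (c.pi2 q1) hq1N hl2]; right; rfl
    refine ⟨c.pi2 q1, hl2, ⟨hl1, hl2, ?_, ?_, ?_, ?_, ?_⟩, ?_, ?_, ?_, ?_⟩
    · rw [c.inv1 p1 hp1N, c.inv2 q1 hq1N]; omega
    · unfold tr at htr3 ⊢; omega
    · unfold tr at htr4 ⊢; omega
    · rw [c.inv1 p1 hp1N, c.inv2 q1 hq1N]; unfold tr at htr1 ⊢; omega
    · rw [c.inv1 p1 hp1N, c.inv2 q1 hq1N]; unfold tr at htr2 ⊢; omega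
    · exact hdir
    · omega
    · omega
    · rw [iff_of_true hd1T hd2T]
  -- main case : p2 not in the class of p1
  have hd1 : ¬ (c.d1 p1 = c.d1 p2) := by
    rw [c.deq1 p1 p2 hp1N hp2]; rintro (h | h) <;> [exact h1 h; exact h2 h]
  rcases dicho c k p1 q1 hk hsim with ⟨hq1e, hpq1e, hstd1⟩ | ⟨g1,g2,g3,g4,g5,g6,g7,g8⟩
  · -- EXACT case : q1 = p1 and partners agree
    by_cases hstd2 : p2 < c.P ∨ c.P + 3 < p2
    · obtain ⟨hpie, hde⟩ := c.agree p2 hp2 hstd2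
      refine ⟨p2, hp2, simSelf c k p2 hp2 hpie, by omega, by omega, by omega, ?_⟩
      rw [c.deq1 p1 p2 hp1N hp2, c.deq2 q1 p2 hq1N hp2, hpq1e, hq1e]
    · -- p2 in the surgery block
      have hclp2 := c.cl1 p2 hp2
      have hpl2 := c.lt1 p2 hp2
      by_cases hside : p1 < c.P
      · obtain ⟨q2, hh1, hh2, hh3, hh4, hh5, hh6⟩ :=
          c.win2 (c.P+3) p2 q1 (c.pi2 q1) (by omega)
        have hclq2 := c.cl2 q2 hh3
        refine ⟨q2, hh3, ⟨hp2, hh3, hh4.symm, ?_, ?_, ?_, ?_⟩, by omega, by omega, by omega, ?_⟩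
        · unfold tr; omega
        · unfold tr; omega
        · unfold tr; omega
        · unfold tr; omega
        · rw [c.deq1 p1 p2 hp1N hp2, c.deq2 q1 q2 hq1N hh3]; omega
      · obtain ⟨q2, hh1, hh2, hh3, hh4, hh5, hh6⟩ :=
          c.win2 (c.P - 17) p2 q1 (c.pi2 q1) (by omega)
        have hclq2 := c.cl2 q2 hh3
        refine ⟨q2, hh3, ⟨hp2, hh3, hh4.symm, ?_, ?_, ?_, ?_⟩, by omega, by omega, by omega, ?_⟩
        · unfold tr; omega
        · unfold tr; omega
        · unfold tr; omega
        · unfold tr; omega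
        · rw [c.deq1 p1 p2 hp1N hp2, c.deq2 q1 q2 hq1N hh3]; omega
  · -- DEEP case
    have hclp2 := c.cl1 p2 hp2
    have hpl2 := c.lt1 p2 hp2
    by_cases hpin : p2 < 20*k+20 ∨ c.N-1-p2 < 20*k+20 ∨ c.pi1 p2 < 20*k+20 ∨
        c.N-1-c.pi1 p2 < 20*k+20
    · -- pinned p2 : mirror it identically
      have hstd2 : p2 < c.P ∨ c.P + 3 < p2 := by omega
      obtain ⟨hpie, hde⟩ := c.agree p2 hp2 hstd2
      refine ⟨p2, hp2, simSelf c k p2 hp2 hpie, by omega, by omega, by omega, ?_⟩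
      rw [c.deq1 p1 p2 hp1N hp2, c.deq2 q1 p2 hq1N hp2]; omega
    · push_neg at hpin
      rcases Nat.lt_trichotomy p2 p1 with hlt | heq | hgt
      · obtain ⟨q2, hh1, hh2, hh3, hh4, hh5, hh6⟩ :=
          c.win2 (q1 - 17) p2 q1 (c.pi2 q1) (by omega)
        have hclq2 := c.cl2 q2 hh3
        refine ⟨q2, hh3, ⟨hp2, hh3, hh4.symm, ?_, ?_, ?_, ?_⟩, by omega, by omega, by omega, ?_⟩
        · unfold tr; omega
        · unfold tr; omega
        · unfold tr; omega
        · unfold tr; omega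
        · rw [c.deq1 p1 p2 hp1N hp2, c.deq2 q1 q2 hq1N hh3]; omega
      · exact absurd heq h1
      · obtain ⟨q2, hh1, hh2, hh3, hh4, hh5, hh6⟩ :=
          c.win2 q1 p2 q1 (c.pi2 q1) (by omega)
        have hclq2 := c.cl2 q2 hh3
        refine ⟨q2, hh3, ⟨hp2, hh3, hh4.symm, ?_, ?_, ?_, ?_⟩, by omega, by omega, by omega, ?_⟩
        · unfold tr; omega
        · unfold tr; omega
        · unfold tr; omega
        · unfold tr; omega
        · rw [c.deq1 p1 p2 hp1N hp2, c.deq2 q1 q2 hq1N hh3]; omega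


def dep {L : Type} : FO L → ℕ
  | .exist _ φ => dep φ + 1
  | .or φ ψ => max (dep φ) (dep ψ)
  | .not φ => dep φ
  | _ => 0

def wrd {L D : Type} (ℓ : L) (emb : ℕ → D) (Nn : ℕ) (f : ℕ → ℕ) : List (L × D) :=
  List.ofFn (n := Nn) fun i => (ℓ, emb (f i))

@[simp] lemma wrd_length {L D : Type} (ℓ : L) (emb : ℕ → D) (Nn : ℕ) (f : ℕ → ℕ) :
    (wrd ℓ emb Nn f).length = Nn := by simp [wrd]

lemma wrd_get {L D : Type} (ℓ : L) (emb : ℕ → D) (Nn : ℕ) (f : ℕ → ℕ) (m : ℕ)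
    (h : m < (wrd ℓ emb Nn f).length) :
    (wrd ℓ emb Nn f).get ⟨m, h⟩ = (ℓ, emb (f m)) := by
  simp [wrd, List.get_ofFn]

lemma sat_lab {L D : Type} (ℓ : L) (emb : ℕ → D) (Nn : ℕ) (f : ℕ → ℕ)
    (a : L) (i : ℕ) (v : ℕ → ℕ) :
    FO.Sat (wrd ℓ emb Nn f) (.lab a i) v ↔ (v i < Nn ∧ ℓ = a) := by
  constructor
  · rintro ⟨h, hg⟩
    rw [wrd_get] at hg
    exact ⟨by simpa using h, by simpa using hg⟩
  · rintro ⟨h, hg⟩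
    refine ⟨by simpa using h, ?_⟩
    rw [wrd_get]; simpa using hg

lemma sat_dataEq {L D : Type} (ℓ : L) (emb : ℕ → D) (hinj : Function.Injective emb)
    (Nn : ℕ) (f : ℕ → ℕ) (i j : ℕ) (v : ℕ → ℕ) :
    FO.Sat (wrd ℓ emb Nn f) (.dataEq i j) v ↔
      (v i < Nn ∧ v j < Nn ∧ f (v i) = f (v j)) := by
  constructor
  · rintro ⟨hx, hy, hg⟩
    rw [wrd_get, wrd_get] at hg
    exact ⟨by simpa using hx, by simpa using hy, hinj (by simpa using hg)⟩
  · rintro ⟨hx, hy, hg⟩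
    refine ⟨by simpa using hx, by simpa using hy, ?_⟩
    rw [wrd_get, wrd_get]; simp [hg]

lemma C4.swapPair {c : Ctx} {a b a' b' : ℕ} (h : C4 c a b a' b') : C4 c b a b' a' := by
  unfold C4 at *; omega

lemma C4.ofSwap {c : Ctx} {a b a' b' : ℕ} (h : C4 c.swap a b a' b') : C4 c a' b' a b := by
  simp only [C4, Ctx.swap] at *; omega

lemma Sim.ofSwap {c : Ctx} {k p q : ℕ} (h : Sim c.swap k p q) : Sim c k q p := by
  simp only [Sim, Ctx.swap, tr] at *; omega

/-- The central transfer lemma: a 2-variable, successor-free formula of depth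
at most `k` cannot distinguish the two words of a context with budget `k`. -/
lemma central {L D : Type} (ℓ : L) (emb : ℕ → D) (hinj : Function.Injective emb) :
    ∀ φ : FO L, FO.VarsLt 2 φ → FO.NoSucc φ →
    ∀ (c : Ctx) (k : ℕ), dep φ ≤ k → 20*k+100 < c.P →
    ∀ v w : ℕ → ℕ, Sim c k (v 0) (w 0) → Sim c k (v 1) (w 1) →
    C4 c (v 0) (v 1) (w 0) (w 1) →
    (FO.Sat (wrd ℓ emb c.N c.d1) φ v ↔ FO.Sat (wrd ℓ emb c.N c.d2) φ w) := by
  intro φ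
  induction φ with
  | lab a i =>
    intro hv hn c k hdep hP v w s0 s1 hc
    have hi : i < 2 := hv
    rw [sat_lab, sat_lab]
    interval_cases i
    · simp [s0.1, s0.2.1]
    · simp [s1.1, s1.2.1]
  | eq i j =>
    intro hv hn c k hdep hP v w s0 s1 hc
    have hi : i < 2 ∧ j < 2 := hv
    obtain ⟨hi, hj⟩ := hi
    show v i = v j ↔ w i = w j
    interval_cases i <;> interval_cases j
    · simp
    · exact hc.2.2.1
    · exact eq_comm.trans (hc.2.2.1.trans eq_comm)
    · simp
  | dataEq i j =>
    intro hv hn c k hdep hP v w s0 s1 hc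
    have hi : i < 2 ∧ j < 2 := hv
    obtain ⟨hi, hj⟩ := hi
    rw [sat_dataEq _ _ hinj, sat_dataEq _ _ hinj]
    interval_cases i <;> interval_cases j
    · simp [s0.1, s0.2.1]
    · simp only [s0.1, s1.1, s0.2.1, s1.2.1, true_and]
      exact hc.2.2.2
    · simp only [s0.1, s1.1, s0.2.1, s1.2.1, true_and]
      exact eq_comm.trans (hc.2.2.2.trans eq_comm)
    · simp [s1.1, s1.2.1]
  | lt i j =>
    intro hv hn c k hdep hP v w s0 s1 hc
    have hi : i < 2 ∧ j < 2 := hv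
    obtain ⟨hi, hj⟩ := hi
    show v i < v j ↔ w i < w j
    interval_cases i <;> interval_cases j
    · simp
    · exact hc.1
    · exact hc.2.1
    · simp
  | succ i j =>
    intro hv hn
    exact hn.elim
  | or φ ψ ihφ ihψ =>
    intro hv hn c k hdep hP v w s0 s1 hc
    have hd := Nat.max_le.mp hdep
    exact or_congr (ihφ hv.1 hn.1 c k hd.1 hP v w s0 s1 hc)
      (ihψ hv.2 hn.2 c k hd.2 hP v w s0 s1 hc)
  | not φ ih =>
    intro hv hn c k hdep hP v w s0 s1 hc
    exact not_congr (ih hv hn c k hdep hP v w s0 s1 hc)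
  | exist n φ ih =>
    intro hv hn c k hdep hP v w s0 s1 hc
    obtain ⟨hn2, hv'⟩ := hv
    have hns : FO.NoSucc φ := hn
    obtain ⟨k0, rfl⟩ : ∃ k0, k = k0+1 := by
      have : dep φ + 1 ≤ k := hdep
      exact ⟨k-1, by omega⟩
    have hP0 : 20*k0+100 < c.P := by omega
    have hdep0 : dep φ ≤ k0 := by
      have : dep φ + 1 ≤ k0+1 := hdep
      omega
    simp only [FO.Sat, wrd_length]
    interval_cases n
    · constructor
      · rintro ⟨p, hp, hs⟩
        obtain ⟨q2, hq2N, hsim2, hc4⟩ := forth c k0 (v 1) (w 1) hP0 s1 p hp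
        refine ⟨q2, hq2N, ?_⟩
        refine (ih hv' hns c k0 hdep0 hP0 (Function.update v 0 p)
          (Function.update w 0 q2) ?_ ?_ ?_).mp hs
        · simpa using hsim2
        · simpa using Sim.mono s1
        · simpa using C4.swapPair hc4
      · rintro ⟨p, hp, hs⟩
        obtain ⟨q2, hq2N, hsim2, hc4⟩ := forth c.swap k0 (w 1) (v 1) hP0 (Sim.swap s1) p hp
        refine ⟨q2, hq2N, ?_⟩
        refine (ih hv' hns c k0 hdep0 hP0 (Function.update v 0 q2)
          (Function.update w 0 p) ?_ ?_ ?_).mpr hs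
        · simpa using Sim.ofSwap hsim2
        · simpa using Sim.mono s1
        · simpa using C4.swapPair (C4.ofSwap hc4)
    · constructor
      · rintro ⟨p, hp, hs⟩
        obtain ⟨q2, hq2N, hsim2, hc4⟩ := forth c k0 (v 0) (w 0) hP0 s0 p hp
        refine ⟨q2, hq2N, ?_⟩
        refine (ih hv' hns c k0 hdep0 hP0 (Function.update v 1 p)
          (Function.update w 1 q2) ?_ ?_ ?_).mp hs
        · simpa using Sim.mono s0
        · simpa using hsim2
        · simpa using hc4
      · rintro ⟨p, hp, hs⟩
        obtain ⟨q2, hq2N, hsim2, hc4⟩ := forth c.swap k0 (w 0) (v 0) hP0 (Sim.swap s0) p hp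
        refine ⟨q2, hq2N, ?_⟩
        refine (ih hv' hns c k0 hdep0 hP0 (Function.update v 1 q2)
          (Function.update w 1 p) ?_ ?_ ?_).mpr hs
        · simpa using Sim.mono s0
        · simpa using Sim.ofSwap hsim2
        · simpa using C4.ofSwap hc4

set_option maxHeartbeats 2000000 in
/-- the concrete pair of words: B with classes `{4b,4b+2},{4b+1,4b+3}` (no two
adjacent positions share data), A equal to B except for the surgery block
`[P,P+4)` where classes are the adjacent pairs `{P,P+1},{P+2,P+3}`. -/
def mkCtx (P : ℕ) (hP4 : P % 4 = 0) (hbig : 100 < P) : Ctx where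
  N := 2*P
  P := P
  pi1 := piA P
  pi2 := piB
  d1 := dA P
  d2 := dB
  hN := rfl
  lt1 := fun x hx => by have := piA_spec P x; have := piB_spec x; omega
  inv1 := fun x hx => by
    have := piA_spec P x; have := piA_spec P (piA P x); have := piB_spec x
    have := piB_spec (piA P x); omega
  ne1 := fun x hx => by have := piA_spec P x; have := piB_spec x; omega
  cl1 := fun x hx => by have := piA_spec P x; have := piB_spec x; omega
  deq1 := fun x y hx hy => by
    have := piA_spec P x; have := piB_spec x
    have := dA_spec P x; have := dA_spec P y; have := dB_spec x; have := dB_spec y; omega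
  lt2 := fun x hx => by have := piB_spec x; omega
  inv2 := fun x hx => by have := piB_spec x; have := piB_spec (piB x); omega
  ne2 := fun x hx => by have := piB_spec x; omega
  cl2 := fun x hx => by have := piB_spec x; omega
  deq2 := fun x y hx hy => by
    have := piB_spec x; have := dB_spec x; have := dB_spec y; omega
  agree := fun x hx h => by
    constructor
    · have := piA_spec P x; omega
    · have := dA_spec P x; omega
  win2 := fun x z a b hx => windowB P (2*P) hP4 rfl x z a b hx
  win1 := fun x z a b hx => windowA P (2*P) hP4 rfl x z a b hx

/-- the separating formula : two adjacent positions carry the same datum -/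
def sepF (L : Type) : FO L :=
  FO.exist 0 (FO.exist 1 (FO.and (FO.succ 0 1) (FO.dataEq 0 1)))

lemma sepF_vars (L : Type) : FO.VarsLt 2 (sepF L) :=
  ⟨by omega, by omega, ⟨by omega, by omega⟩, by omega, by omega⟩

lemma sat_sepF {L D : Type} (ℓ : L) (emb : ℕ → D) (hinj : Function.Injective emb)
    (Nn : ℕ) (f : ℕ → ℕ) :
    FO.Sat (wrd ℓ emb Nn f) (sepF L) (fun _ => 0) ↔
      ∃ p', p' + 1 < Nn ∧ f (p' + 1) = f p' := by
  have e0 : ∀ X Y : ℕ,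
      Function.update (Function.update (fun _ => (0:ℕ)) 0 X) 1 Y 0 = X := by
    intro X Y; simp
  have e1 : ∀ X Y : ℕ,
      Function.update (Function.update (fun _ => (0:ℕ)) 0 X) 1 Y 1 = Y := by
    intro X Y; simp
  simp only [sepF, FO.and, FO.Sat, wrd_length, not_or, not_not, e0, e1]
  constructor
  · rintro ⟨p, hp, p', hp', hsucc, hx, hy, hdata⟩
    rw [wrd_get, wrd_get] at hdata
    have := hinj (by simpa using hdata)
    exact ⟨p', by omega, by rw [← hsucc]; exact this⟩
  · rintro ⟨p', hp', hdata⟩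
    refine ⟨p'+1, by omega, p', by omega, rfl, by omega, by omega, ?_⟩
    rw [wrd_get, wrd_get]
    simp [hdata]

end Sep

/-- every data language definable in FO²(∼,<) is definable in
FO²(∼,<,+1), but not conversely: some FO²(∼,<,+1)-definable language is not
FO²(∼,<)-definable.  Hence FO²(∼,<) ⊊ FO²(∼,<,+1) as classes of data
languages. -/
theorem FO2_lt_strictly_below_FO2_lt_succ (L D : Type) [Finite L] [Nonempty L]
    [Infinite D] :
    {S : Set (List (L × D)) | ∃ φ : FO L, FO.VarsLt 2 φ ∧ FO.NoSucc φ ∧ FO.Lang D φ = S} ⊂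
    {S : Set (List (L × D)) | ∃ φ : FO L, FO.VarsLt 2 φ ∧ FO.Lang D φ = S} := by
  rw [Set.ssubset_def]
  constructor
  · rintro S ⟨φ, h1, h2, h3⟩
    exact ⟨φ, h1, h3⟩
  · intro hsub
    obtain ⟨ψ, hψv, hψn, hψeq⟩ := hsub ⟨Sep.sepF L, Sep.sepF_vars L, rfl⟩
    set t := Sep.dep ψ with ht
    set P := 20 * Sep.dep ψ + 120 with hPdef
    have hP4 : P % 4 = 0 := by omega
    have hbig : 100 < P := by omega
    set c := Sep.mkCtx P hP4 hbig with hc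
    set ℓ := Classical.arbitrary L with hℓ
    set emb : ℕ → D := fun n => Infinite.natEmbedding D n with hemb
    have hinj : Function.Injective emb := fun a b h => (Infinite.natEmbedding D).injective h
    have hAmem : Sep.wrd ℓ emb (2*P) (Sep.dA P) ∈ FO.Lang D (Sep.sepF L) := by
      show FO.Sat _ _ _
      rw [Sep.sat_sepF _ _ hinj]
      refine ⟨P, by omega, ?_⟩
      have := Sep.dA_spec P (P+1); have := Sep.dA_spec P P; have := Sep.dB_spec P
      omega
    have hBnot : Sep.wrd ℓ emb (2*P) Sep.dB ∉ FO.Lang D (Sep.sepF L) := by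
      intro hmem
      have hmem' : FO.Sat (Sep.wrd ℓ emb (2*P) Sep.dB) (Sep.sepF L) (fun _ => 0) := hmem
      rw [Sep.sat_sepF _ _ hinj] at hmem'
      obtain ⟨p', hp', he⟩ := hmem'
      have := Sep.dB_spec (p'+1); have := Sep.dB_spec p'
      omega
    have hag0 : Sep.piA P 0 = Sep.piB 0 := by
      have := Sep.piA_spec P 0; have := Sep.piB_spec 0; omega
    have simS : Sep.Sim c t 0 0 := by
      refine ⟨by show (0:ℕ) < 2*P; omega, by show (0:ℕ) < 2*P; omega, ?_,
        Or.inl rfl, Or.inl rfl, Or.inl hag0, Or.inl (by rw [show c.pi1 0 = c.pi2 0 from hag0])⟩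
      show 0 < Sep.piA P 0 ↔ 0 < Sep.piB 0
      rw [hag0]
    have c40 : Sep.C4 c 0 0 0 0 := ⟨Iff.rfl, Iff.rfl, Iff.rfl, Iff.rfl⟩
    have hcP : (20:ℕ)*t+100 < c.P := by
      show 20*t+100 < P
      omega
    have htrans := Sep.central ℓ emb hinj ψ hψv hψn c t le_rfl hcP
      (fun _ => 0) (fun _ => 0) simS simS c40
    have hA' : FO.Sat (Sep.wrd ℓ emb (2*P) (Sep.dA P)) ψ (fun _ => 0) := by
      have : Sep.wrd ℓ emb (2*P) (Sep.dA P) ∈ FO.Lang D ψ := by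
        rw [hψeq]; exact hAmem
      exact this
    have hB' : FO.Sat (Sep.wrd ℓ emb (2*P) Sep.dB) ψ (fun _ => 0) := htrans.mp hA'
    have hBmem : Sep.wrd ℓ emb (2*P) Sep.dB ∈ FO.Lang D ψ := hB'
    rw [hψeq] at hBmem
    exact hBnot hBmem
end

section
/- Every data language definable in two-variable first-order logic FO²(∼,<,+1) over data strings is definable in existential monadic second-order logic EMSO²(∼,<,+1), and the inclusion is strict. -/
/-- Syntax of monadic second-order logic over data strings, with label
predicates, position equality, data equality `∼`, order `<`, successor `+1`,
set membership and both first- and second-order quantification. -/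
inductive MSO (L : Type) : Type
  | lab : L → ℕ → MSO L          -- `a(x)`
  | eq : ℕ → ℕ → MSO L           -- `x = y`
  | dataEq : ℕ → ℕ → MSO L       -- `x ∼ y`
  | lt : ℕ → ℕ → MSO L           -- `x < y`
  | succ : ℕ → ℕ → MSO L         -- `x = y + 1`
  | mem : ℕ → ℕ → MSO L          -- `x ∈ X`
  | exist : ℕ → MSO L → MSO L    -- `∃ x. φ` (first order)
  | existS : ℕ → MSO L → MSO L   -- `∃ X. φ` (second order, over sets of positions)
  | or : MSO L → MSO L → MSO L
  | not : MSO L → MSO L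

namespace MSO

variable {L D : Type}

/-- Satisfaction in a data string `w : List (L × D)` under a first-order
valuation (variables ↦ positions) and a second-order valuation
(set variables ↦ sets of positions). -/
def Sat (w : List (L × D)) : MSO L → (ℕ → ℕ) → (ℕ → Set ℕ) → Prop
  | lab a x, v, _ => ∃ h : v x < w.length, (w.get ⟨v x, h⟩).1 = a
  | eq x y, v, _ => v x = v y
  | dataEq x y, v, _ => ∃ (hx : v x < w.length) (hy : v y < w.length),
      (w.get ⟨v x, hx⟩).2 = (w.get ⟨v y, hy⟩).2
  | lt x y, v, _ => v x < v y
  | succ x y, v, _ => v x = v y + 1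
  | mem x X, v, V => v x ∈ V X
  | exist n φ, v, V => ∃ p, p < w.length ∧ Sat w φ (Function.update v n p) V
  | existS n φ, v, V => ∃ S : Set ℕ, (∀ p ∈ S, p < w.length) ∧
      Sat w φ v (Function.update V n S)
  | or φ ψ, v, V => Sat w φ v V ∨ Sat w ψ v V
  | not φ, v, V => ¬ Sat w φ v V

/-- The data language defined by a formula (over data domain `D`). -/
def Lang (D : Type) (φ : MSO L) : Set (List (L × D)) :=
  {w | Sat w φ (fun _ => 0) (fun _ => ∅)}

def and (φ ψ : MSO L) : MSO L := not (or (not φ) (not ψ))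

def imp (φ ψ : MSO L) : MSO L := or (not φ) ψ

def all (n : ℕ) (φ : MSO L) : MSO L := not (exist n (not φ))

def allS (n : ℕ) (φ : MSO L) : MSO L := not (existS n (not φ))

/-- All first-order variables of the formula have index `< n`
(set variables are unrestricted). -/
def FOVarsLt (n : ℕ) : MSO L → Prop
  | lab _ x => x < n
  | eq x y => x < n ∧ y < n
  | dataEq x y => x < n ∧ y < n
  | lt x y => x < n ∧ y < n
  | succ x y => x < n ∧ y < n
  | mem x _ => x < n
  | exist m φ => m < n ∧ FOVarsLt n φ
  | existS _ φ => FOVarsLt n φ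
  | or φ ψ => FOVarsLt n φ ∧ FOVarsLt n ψ
  | not φ => FOVarsLt n φ

/-- The formula has no second-order quantifier. -/
def NoSetQuant : MSO L → Prop
  | existS _ _ => False
  | exist _ φ => NoSetQuant φ
  | or φ ψ => NoSetQuant φ ∧ NoSetQuant ψ
  | not φ => NoSetQuant φ
  | _ => True

/-- The formula is purely first order: no set quantifiers and no membership
atoms. -/
def IsFirstOrder : MSO L → Prop
  | existS _ _ => False
  | mem _ _ => False
  | exist _ φ => IsFirstOrder φ
  | or φ ψ => IsFirstOrder φ ∧ IsFirstOrder ψ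
  | not φ => IsFirstOrder φ
  | _ => True

/-- The formula does not use the order predicate `<`. -/
def NoLt : MSO L → Prop
  | lt _ _ => False
  | exist _ φ => NoLt φ
  | existS _ φ => NoLt φ
  | or φ ψ => NoLt φ ∧ NoLt ψ
  | not φ => NoLt φ
  | _ => True

/-- The formula does not use the successor predicate `+1`. -/
def NoSucc : MSO L → Prop
  | succ _ _ => False
  | exist _ φ => NoSucc φ
  | existS _ φ => NoSucc φ
  | or φ ψ => NoSucc φ ∧ NoSucc ψ
  | not φ => NoSucc φ
  | _ => True

end MSO

/-- A formula is in EMSO² iff it is a block of existential second-order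
quantifiers followed by a two-variable first-order formula (which may mention
the quantified set variables). -/
inductive IsEMSO2 {L : Type} : MSO L → Prop
  | base : ∀ φ : MSO L, MSO.NoSetQuant φ → MSO.FOVarsLt 2 φ → IsEMSO2 φ
  | step : ∀ (n : ℕ) (φ : MSO L), IsEMSO2 φ → IsEMSO2 (MSO.existS n φ)


/-! ### Auxiliary development for the proof -/

set_option maxHeartbeats 2000000

namespace FO2EMSO2

open MSO

variable {L D : Type}

/-- Threshold (a rank measure) of a formula. -/
def thr : MSO L → ℕ
  | .exist _ φ => 2 * thr φ + 2
  | .existS _ φ => thr φ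
  | .or φ ψ => max (thr φ) (thr ψ)
  | .not φ => thr φ
  | _ => 2

lemma two_le_thr (φ : MSO L) : 2 ≤ thr φ := by
  induction φ <;> simp [thr] <;> omega

/-- Equivalence of two configurations (a word length together with the values
of the two first-order variables) up to threshold `t`. -/
def Econf (t n p q n' p' q' : ℕ) : Prop :=
  min p t = min p' t ∧ min q t = min q' t ∧
  min (n - p) t = min (n' - p') t ∧ min (n - q) t = min (n' - q') t ∧
  min (p - q) t = min (p' - q') t ∧ min (q - p) t = min (q' - p') t

lemma Econf.symm {t n p q n' p' q'} (h : Econf t n p q n' p' q') :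
    Econf t n' p' q' n p q := by
  obtain ⟨a, b, c, d, e, f⟩ := h
  exact ⟨a.symm, b.symm, c.symm, d.symm, e.symm, f.symm⟩

lemma Econf.swap {t n p q n' p' q'} (h : Econf t n p q n' p' q') :
    Econf t n q p n' q' p' := by
  obtain ⟨a, b, c, d, e, f⟩ := h
  exact ⟨b, a, d, c, f, e⟩

lemma min_cut {x x' s t : ℕ} (h : min x t = min x' t) (hs : s ≤ t) :
    min x s = min x' s := by omega

lemma Econf.mono {t s n p q n' p' q'} (h : Econf t n p q n' p' q') (hs : s ≤ t) :
    Econf s n p q n' p' q' := by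
  obtain ⟨a, b, c, d, e, f⟩ := h
  exact ⟨min_cut a hs, min_cut b hs, min_cut c hs, min_cut d hs,
    min_cut e hs, min_cut f hs⟩

/-- The basic order/successor facts recoverable from an `Econf`. -/
lemma Econf.dict {t n p q n' p' q'} (h : Econf t n p q n' p' q') (ht : 2 ≤ t) :
    (p = q ↔ p' = q') ∧ (p < q ↔ p' < q') ∧ (q < p ↔ q' < p') ∧
    (p = q + 1 ↔ p' = q' + 1) ∧ (q = p + 1 ↔ q' = p' + 1) := by
  obtain ⟨-, -, -, -, e, f⟩ := h
  refine ⟨?_, ?_, ?_, ?_, ?_⟩ <;> omega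

/-- The back-and-forth step for `Econf`. -/
lemma Econf.step {t n p q n' p' q'} (h : Econf (2 * t + 2) n p q n' p' q')
    (hq : q < n) (hq' : q' < n') (r : ℕ) (hr : r < n) :
    ∃ r', r' < n' ∧ Econf t n r q n' r' q' := by
  obtain ⟨-, b, -, d, -, -⟩ := h
  refine ⟨if q ≤ r ∧ r - q ≤ t then q' + (r - q)
     else if r ≤ q ∧ q - r ≤ t then q' - (q - r)
     else if r ≤ t then r
     else if n - r ≤ t then n' - (n - r)
     else if r < q then q' - (t+1) else q' + (t+1), ?_, ?_, ?_, ?_, ?_, ?_, ?_⟩ <;>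
    first
      | (split_ifs <;> omega)
      | omega

/-- Main invariance lemma: a two-variable first-order formula cannot
distinguish two constant words whose configurations are `thr φ`-equivalent. -/
lemma invariance (a : L) (d : D) :
    ∀ (φ : MSO L), IsFirstOrder φ → FOVarsLt 2 φ → ∀ t, thr φ ≤ t →
    ∀ (n n' p q p' q' : ℕ) (v v' : ℕ → ℕ) (V V' : ℕ → Set ℕ),
      p < n → q < n → p' < n' → q' < n' →
      Econf t n p q n' p' q' →
      v 0 = p → v 1 = q → v' 0 = p' → v' 1 = q' →
      (Sat (List.replicate n (a, d)) φ v V ↔ Sat (List.replicate n' (a, d)) φ v' V') := by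
  intro φ
  induction φ with
  | lab b x =>
    intro _ h2 t ht n n' p q p' q' v v' V V' hp hq hp' hq' hE h0 h1 h0' h1'
    have hx : x < 2 := h2
    simp only [Sat]
    interval_cases x <;>
      · simp only [h0, h1, h0', h1', List.length_replicate]
        constructor
        · rintro ⟨h, hget⟩
          refine ⟨by omega, ?_⟩
          simp only [List.get_eq_getElem, List.getElem_replicate] at hget ⊢
          exact hget
        · rintro ⟨h, hget⟩
          refine ⟨by omega, ?_⟩
          simp only [List.get_eq_getElem, List.getElem_replicate] at hget ⊢
          exact hget
  | eq x y =>
    intro _ h2 t ht n n' p q p' q' v v' V V' hp hq hp' hq' hE h0 h1 h0' h1'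
    obtain ⟨hx, hy⟩ : x < 2 ∧ y < 2 := h2
    have h2t : (2:ℕ) ≤ t := le_trans (two_le_thr _) ht
    obtain ⟨hd1, hd2, hd3, hd4, hd5⟩ := hE.dict h2t
    simp only [Sat]
    interval_cases x <;> interval_cases y <;>
      simp only [h0, h1, h0', h1'] <;> omega
  | dataEq x y =>
    intro _ h2 t ht n n' p q p' q' v v' V V' hp hq hp' hq' hE h0 h1 h0' h1'
    obtain ⟨hx, hy⟩ : x < 2 ∧ y < 2 := h2
    simp only [Sat, List.length_replicate, List.get_eq_getElem, List.getElem_replicate]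
    interval_cases x <;> interval_cases y <;>
      simp only [h0, h1, h0', h1'] <;>
      constructor <;> intro _ <;> exact ⟨by omega, by omega, trivial⟩
  | lt x y =>
    intro _ h2 t ht n n' p q p' q' v v' V V' hp hq hp' hq' hE h0 h1 h0' h1'
    obtain ⟨hx, hy⟩ : x < 2 ∧ y < 2 := h2
    have h2t : (2:ℕ) ≤ t := le_trans (two_le_thr _) ht
    obtain ⟨hd1, hd2, hd3, hd4, hd5⟩ := hE.dict h2t
    simp only [Sat]
    interval_cases x <;> interval_cases y <;>
      simp only [h0, h1, h0', h1'] <;> omega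
  | succ x y =>
    intro _ h2 t ht n n' p q p' q' v v' V V' hp hq hp' hq' hE h0 h1 h0' h1'
    obtain ⟨hx, hy⟩ : x < 2 ∧ y < 2 := h2
    have h2t : (2:ℕ) ≤ t := le_trans (two_le_thr _) ht
    obtain ⟨hd1, hd2, hd3, hd4, hd5⟩ := hE.dict h2t
    simp only [Sat]
    interval_cases x <;> interval_cases y <;>
      simp only [h0, h1, h0', h1'] <;> omega
  | mem x X =>
    intro hfo
    exact absurd hfo (by simp [IsFirstOrder])
  | exist m ψ ih =>
    intro hfo h2 t ht n n' p q p' q' v v' V V' hp hq hp' hq' hE h0 h1 h0' h1'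
    have hfo' : IsFirstOrder ψ := hfo
    obtain ⟨hm, h2'⟩ : m < 2 ∧ FOVarsLt 2 ψ := h2
    have ht' : 2 * thr ψ + 2 ≤ t := ht
    have hE2 : Econf (2 * thr ψ + 2) n p q n' p' q' := hE.mono ht'
    simp only [Sat, List.length_replicate]
    constructor
    · rintro ⟨r, hr, hsat⟩
      interval_cases m
      · obtain ⟨r', hr', hE'⟩ := hE2.step hq hq' r hr
        refine ⟨r', hr', ?_⟩
        exact (ih hfo' h2' (thr ψ) le_rfl n n' r q r' q'
          (Function.update v 0 r) (Function.update v' 0 r') V V' hr hq hr' hq' hE'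
          (by simp) (by simp [Function.update_apply, h1]) (by simp) (by simp [Function.update_apply, h1'])).mp hsat
      · obtain ⟨r', hr', hE'⟩ := hE2.swap.step hp hp' r hr
        refine ⟨r', hr', ?_⟩
        exact (ih hfo' h2' (thr ψ) le_rfl n n' p r p' r'
          (Function.update v 1 r) (Function.update v' 1 r') V V' hp hr hp' hr'
          hE'.swap
          (by simp [Function.update_apply, h0]) (by simp) (by simp [Function.update_apply, h0']) (by simp)).mp hsat
    · rintro ⟨r', hr', hsat⟩
      interval_cases m
      · obtain ⟨r, hr, hE'⟩ := hE2.symm.step hq' hq r' hr'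
        refine ⟨r, hr, ?_⟩
        exact (ih hfo' h2' (thr ψ) le_rfl n n' r q r' q'
          (Function.update v 0 r) (Function.update v' 0 r') V V' hr hq hr' hq'
          hE'.symm
          (by simp) (by simp [Function.update_apply, h1]) (by simp)
          (by simp [Function.update_apply, h1'])).mpr hsat
      · obtain ⟨r, hr, hE'⟩ := hE2.symm.swap.step hp' hp r' hr'
        refine ⟨r, hr, ?_⟩
        exact (ih hfo' h2' (thr ψ) le_rfl n n' p r p' r'
          (Function.update v 1 r) (Function.update v' 1 r') V V' hp hr hp' hr'
          hE'.symm.swap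
          (by simp [Function.update_apply, h0]) (by simp)
          (by simp [Function.update_apply, h0']) (by simp)).mpr hsat
  | existS m ψ ih =>
    intro hfo
    exact absurd hfo (by simp [IsFirstOrder])
  | or φ₁ φ₂ ih1 ih2 =>
    intro hfo h2 t ht n n' p q p' q' v v' V V' hp hq hp' hq' hE h0 h1 h0' h1'
    obtain ⟨hfo1, hfo2⟩ : IsFirstOrder φ₁ ∧ IsFirstOrder φ₂ := hfo
    obtain ⟨h21, h22⟩ : FOVarsLt 2 φ₁ ∧ FOVarsLt 2 φ₂ := h2
    have ht1 : thr φ₁ ≤ t := le_trans (le_max_left _ _) ht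
    have ht2 : thr φ₂ ≤ t := le_trans (le_max_right _ _) ht
    simp only [Sat]
    exact or_congr
      (ih1 hfo1 h21 t ht1 n n' p q p' q' v v' V V' hp hq hp' hq' hE h0 h1 h0' h1')
      (ih2 hfo2 h22 t ht2 n n' p q p' q' v v' V V' hp hq hp' hq' hE h0 h1 h0' h1')
  | not φ₁ ih =>
    intro hfo h2 t ht n n' p q p' q' v v' V V' hp hq hp' hq' hE h0 h1 h0' h1'
    simp only [Sat]
    exact not_congr (ih hfo h2 t ht n n' p q p' q' v v' V V' hp hq hp' hq' hE h0 h1 h0' h1')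

lemma noSetQuant_of_fo : ∀ φ : MSO L, IsFirstOrder φ → NoSetQuant φ := by
  intro φ
  induction φ <;> simp_all [IsFirstOrder, NoSetQuant]

/-- No FO² formula defines the language of even-length words. -/
lemma not_fo2_even (a : L) (d : D) (φ : MSO L) (hfo : IsFirstOrder φ)
    (h2 : FOVarsLt 2 φ)
    (hL : Lang D φ = {w : List (L × D) | Even w.length}) : False := by
  set t := thr φ with hthr
  have h2t : 2 ≤ t := two_le_thr φ
  have hE : Econf t (2*t+2) 0 0 (2*t+3) 0 0 := by
    refine ⟨rfl, rfl, ?_, ?_, rfl, rfl⟩ <;> omega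
  have key := invariance a d φ hfo h2 t le_rfl (2*t+2) (2*t+3) 0 0 0 0
      (fun _ => 0) (fun _ => 0) (fun _ => ∅) (fun _ => ∅)
      (by omega) (by omega) (by omega) (by omega) hE rfl rfl rfl rfl
  have hA := Set.ext_iff.mp hL (List.replicate (2*t+2) (a, d))
  have hB := Set.ext_iff.mp hL (List.replicate (2*t+3) (a, d))
  simp only [Lang, Set.mem_setOf_eq, List.length_replicate] at hA hB
  have e1 : Even (2*t+2) := ⟨t+1, by ring⟩
  have e2 : ¬ Even (2*t+3) := by
    rw [Nat.even_iff]; omega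
  exact e2 (hB.mp (key.mp (hA.mpr e1)))

/-- `φ ↔ ψ` as an `MSO` formula. -/
def iffF (φ ψ : MSO L) : MSO L := MSO.and (MSO.imp φ ψ) (MSO.imp ψ φ)

/-- A two-variable formula saying that the set variable `0` contains the
first position, alternates along successors, and omits the last position:
this forces the word length to be even. -/
def chi : MSO L :=
  MSO.and (MSO.all 0 (MSO.imp (MSO.not (MSO.exist 1 (MSO.succ 0 1))) (MSO.mem 0 0)))
    (MSO.and
      (MSO.all 0 (MSO.all 1 (MSO.imp (MSO.succ 1 0)
        (MSO.not (iffF (MSO.mem 0 0) (MSO.mem 1 0))))))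
      (MSO.all 0 (MSO.imp (MSO.not (MSO.exist 1 (MSO.succ 1 0)))
        (MSO.not (MSO.mem 0 0)))))

/-- The EMSO² sentence defining the even-length words. -/
def psiEven : MSO L := MSO.existS 0 chi

lemma sat_and {w : List (L × D)} {φ ψ : MSO L} {v : ℕ → ℕ} {V : ℕ → Set ℕ} :
    Sat w (MSO.and φ ψ) v V ↔ (Sat w φ v V ∧ Sat w ψ v V) := by
  simp only [MSO.and, Sat, not_or, not_not]

lemma sat_imp {w : List (L × D)} {φ ψ : MSO L} {v : ℕ → ℕ} {V : ℕ → Set ℕ} :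
    Sat w (MSO.imp φ ψ) v V ↔ (Sat w φ v V → Sat w ψ v V) := by
  simp only [MSO.imp, Sat]
  tauto

lemma sat_all {w : List (L × D)} {n : ℕ} {φ : MSO L} {v : ℕ → ℕ} {V : ℕ → Set ℕ} :
    Sat w (MSO.all n φ) v V ↔
      ∀ p, p < w.length → Sat w φ (Function.update v n p) V := by
  simp only [MSO.all, Sat, not_exists, not_and, not_not]

lemma lang_psiEven : Lang D (psiEven (L := L)) = {w : List (L × D) | Even w.length} := by
  ext w
  simp only [Lang, Set.mem_setOf_eq, psiEven, chi, iffF, Sat, sat_and, sat_imp, sat_all,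
    Function.update_apply, if_pos, if_neg, Function.update_self, Function.update_of_ne]
  norm_num
  constructor
  · rintro ⟨S, hS, hfirst, hstep, hlast⟩
    have key : ∀ p, p < w.length → (p ∈ S ↔ Even p) := by
      intro p
      induction p with
      | zero =>
        intro h0
        exact iff_of_true (hfirst 0 h0 (fun r hr => by omega)) Even.zero
      | succ p ih =>
        intro h
        have hp : p < w.length := by omega
        have h2 := hstep p hp (p+1) h rfl
        have ihp := ih hp
        rw [Nat.even_add_one]
        tauto
    rcases Nat.eq_zero_or_pos w.length with h0 | hpos
    · simp [h0]
    · obtain ⟨m, hm⟩ : ∃ m, w.length = m + 1 := ⟨w.length - 1, by omega⟩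
      have hmlt : m < w.length := by omega
      have hnot := hlast m hmlt (by omega)
      have hkm := key m hmlt
      rw [hm, Nat.even_add_one]
      tauto
  · intro hw
    refine ⟨{p | p < w.length ∧ Even p}, fun p hp => hp.1, ?_, ?_, ?_⟩
    · intro p hp hfirst
      have hp0 : p = 0 := by
        by_contra h
        exact hfirst (p-1) (by omega) (by omega)
      subst hp0
      exact ⟨hp, Even.zero⟩
    · intro p hp q hq hsq h'
      subst hsq
      simp only [Set.mem_setOf_eq] at h' ⊢
      have := Nat.even_add_one (n := p)
      tauto
    · intro p hp hge
      rintro ⟨-, hev⟩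
      have hpe : p + 1 = w.length := by omega
      rw [← hpe, Nat.even_add_one] at hw
      exact hw hev

lemma isEMSO2_psiEven : IsEMSO2 (psiEven (L := L)) := by
  refine IsEMSO2.step 0 _ (IsEMSO2.base _ ?_ ?_)
  · simp [chi, iffF, MSO.and, MSO.imp, MSO.all, NoSetQuant]
  · norm_num [chi, iffF, MSO.and, MSO.imp, MSO.all, FOVarsLt]

end FO2EMSO2

/-- every FO²(∼,<,+1)-definable data language is
EMSO²(∼,<,+1)-definable, and the inclusion is strict. -/
theorem FO2_strictly_below_EMSO2 (L D : Type) [Finite L] [Nonempty L] [Infinite D] :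
    {S : Set (List (L × D)) | ∃ φ : MSO L,
        MSO.IsFirstOrder φ ∧ MSO.FOVarsLt 2 φ ∧ MSO.Lang D φ = S} ⊂
    {S : Set (List (L × D)) | ∃ φ : MSO L, IsEMSO2 φ ∧ MSO.Lang D φ = S} := by
  obtain ⟨a⟩ := (inferInstance : Nonempty L)
  obtain ⟨d⟩ := (inferInstance : Nonempty D)
  rw [Set.ssubset_def]
  constructor
  · rintro S ⟨φ, hfo, h2, hL⟩
    exact ⟨φ, IsEMSO2.base φ (FO2EMSO2.noSetQuant_of_fo φ hfo) h2, hL⟩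
  · intro h
    obtain ⟨φ, hfo, h2, hL⟩ :=
      h ⟨FO2EMSO2.psiEven, FO2EMSO2.isEMSO2_psiEven, FO2EMSO2.lang_psiEven⟩
    exact FO2EMSO2.not_fo2_even a d φ hfo h2 hL
end
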